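/- arXiv:math-ph/0401046 — 2 statements merged into one kernel-verified Lean document; each statement's English description precedes it below -/
import Mathlib

section
/- Let η ∈ W* with η_P ≠ 0, and suppose there exists a Hamiltonian n-frame for η. Let ξ ∈ W be such that for every Hamiltonian n-frame (X₁,…,Xₙ) for η, every index 1 ≤ i ≤ n, and every Y ∈ W, one has Ω(X₁,…,X_{i−1}, Y, X_{i+1},…,Xₙ, ξ) = 0. Then pr_Q ξ = 0, i.e. ξ lies in the vertical subspace {0} × P. -/
open ExteriorAlgebra

set_option synthInstance.maxHeartbeats 1000000
set_option maxHeartbeats 1000000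

/-- The wedge `v₁ ∧ ⋯ ∧ vₙ` of `n` vectors, as an element of the `n`-th exterior power. -/
noncomputable def wedge {Q : Type*} [AddCommGroup Q] [Module ℝ Q] (n : ℕ) (v : Fin n → Q) :
    ⋀[ℝ]^n Q :=
  ⟨ExteriorAlgebra.ιMulti ℝ n v, ExteriorAlgebra.ιMulti_range ℝ n ⟨v, rfl⟩⟩

/-- The phase space `W = Q × P` with `Q = ℝ^(n+k)` and `P = (⋀ⁿQ)*`. -/
abbrev phaseSpace (n k : ℕ) :=
  (Fin (n + k) → ℝ) × Module.Dual ℝ (⋀[ℝ]^n (Fin (n + k) → ℝ))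

/-- The canonical multisymplectic form
`Ω(w₁,…,w_{n+1}) = Σᵢ (−1)^(i−1) πᵢ(ξ₁ ∧ ⋯ ∧ ξ̂ᵢ ∧ ⋯ ∧ ξ_{n+1})` on `W = Q × P`,
where `w_j = (ξ_j, π_j)`. -/
noncomputable def multisymp (n k : ℕ) (w : Fin (n + 1) → phaseSpace n k) : ℝ :=
  ∑ i : Fin (n + 1), (-1 : ℝ) ^ (i : ℕ) *
    (w i).2 (wedge n (fun j => (w (i.succAbove j)).1))

/-- A Hamiltonian `n`-frame for a linear form `η` on `W`: an `n`-tuple `X` of vectors of `W`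
with `X₁ ∧ ⋯ ∧ Xₙ ≠ 0` satisfying the Hamilton equation `Ω(X₁,…,Xₙ,Y) = (−1)ⁿ η(Y)`. -/
noncomputable def IsHamFrame (n k : ℕ) (η : Module.Dual ℝ (phaseSpace n k))
    (X : Fin n → phaseSpace n k) : Prop :=
  ExteriorAlgebra.ιMulti ℝ n X ≠ 0 ∧
    ∀ Y : phaseSpace n k,
      multisymp n k (Fin.snoc X Y : Fin (n + 1) → phaseSpace n k) = (-1 : ℝ) ^ n * η Y



lemma aux_ne_zero {M : Type*} [AddCommGroup M] [Module ℝ M] {n : ℕ} {v : Fin n → M}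
    (hv : LinearIndependent ℝ v) : ExteriorAlgebra.ιMulti ℝ n v ≠ 0 := by
  classical
  have hv' := hv.linearIndepOn_id
  let b := Module.Basis.extend hv'
  have hsub : Set.range v ⊆ hv'.extend (Set.subset_univ _) := hv'.subset_extend _
  let e : Fin n → ↥(hv'.extend (Set.subset_univ _)) := fun i => ⟨v i, hsub ⟨i, rfl⟩⟩
  have hbe : ∀ i, b (e i) = v i := fun i => Module.Basis.extend_apply_self hv' _
  have he : Function.Injective e := fun i j h =>
    hv.injective (congrArg Subtype.val h)
  let g : M →ₗ[ℝ] (Fin n → ℝ) := LinearMap.pi (fun j => b.coord (e j))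
  let f : M [⋀^Fin n]→ₗ[ℝ] ℝ := (Matrix.detRowAlternating).compLinearMap g
  have hf : f v = 1 := by
    have hmat : (fun i => g (v i)) = (1 : Matrix (Fin n) (Fin n) ℝ) := by
      funext i j
      have : g (v i) j = b.repr (b (e i)) (e j) := by
        simp [g, hbe i, Module.Basis.coord_apply]
      rw [this, Module.Basis.repr_self_apply, Matrix.one_apply]
      simp [he.eq_iff, eq_comm]
    show Matrix.detRowAlternating (fun i => g (v i)) = 1
    rw [hmat]
    exact Matrix.det_one
  intro h0
  have := congrArg (ExteriorAlgebra.liftAlternating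
    (Function.update (fun _ => 0) n f)) h0
  rw [ExteriorAlgebra.liftAlternating_apply_ιMulti, map_zero, Function.update_self] at this
  rw [hf] at this
  exact one_ne_zero this

lemma wedge_coord_zero {Q : Type*} [AddCommGroup Q] [Module ℝ Q] {n : ℕ} {v : Fin n → Q}
    {j : Fin n} (h : v j = 0) : wedge n v = 0 :=
  Subtype.ext ((ExteriorAlgebra.ιMulti ℝ n).map_coord_zero j h)

lemma fst_snoc {n : ℕ} {α β : Type*} (X : Fin n → α × β) (Y : α × β) (j : Fin (n + 1)) :
    ((Fin.snoc X Y : Fin (n + 1) → α × β) j).1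
      = (Fin.snoc (fun l => (X l).1) Y.1 : Fin (n + 1) → α) j := by
  induction j using Fin.lastCases with
  | last => simp
  | cast j => simp

lemma comp1 (n k : ℕ) (X : Fin n → phaseSpace n k)
    (π : Module.Dual ℝ (⋀[ℝ]^n (Fin (n + k) → ℝ))) :
    multisymp n k (Fin.snoc X (0, π)) =
      (-1 : ℝ) ^ n * π (wedge n (fun j => (X j).1)) := by
  unfold multisymp
  rw [Fin.sum_univ_castSucc]
  have h1 : ∀ m : Fin n,
      (-1 : ℝ) ^ ((m.castSucc : Fin (n+1)) : ℕ) *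
        ((Fin.snoc X ((0 : Fin (n+k) → ℝ), π) : Fin (n+1) → phaseSpace n k) m.castSucc).2
          (wedge n fun j => ((Fin.snoc X ((0 : Fin (n+k) → ℝ), π) : Fin (n+1) → phaseSpace n k)
            (m.castSucc.succAbove j)).1) = 0 := by
    intro m
    obtain ⟨z, hz⟩ := Fin.exists_succAbove_eq
      (x := Fin.last n) (y := m.castSucc) (Fin.ne_of_lt (Fin.castSucc_lt_last m)).symm
    have hzero : ((Fin.snoc X ((0 : Fin (n+k) → ℝ), π) : Fin (n+1) → phaseSpace n k)
        (m.castSucc.succAbove z)).1 = 0 := by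
      rw [hz]; simp
    rw [wedge_coord_zero hzero]
    simp
  rw [Finset.sum_eq_zero (fun m _ => h1 m)]
  simp

lemma comp2 (n k : ℕ) (X : Fin n → phaseSpace n k) (ξ : phaseSpace n k) (i : Fin n)
    (π : Module.Dual ℝ (⋀[ℝ]^n (Fin (n + k) → ℝ))) :
    multisymp n k (Fin.snoc (Function.update X i (0, π)) ξ) =
      (-1 : ℝ) ^ (i : ℕ) *
        π (wedge n (fun l => ((Fin.snoc X ξ : Fin (n+1) → phaseSpace n k)
            (i.castSucc.succAbove l)).1)) := by
  classical
  set Y : phaseSpace n k := ((0 : Fin (n+k) → ℝ), π) with hY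
  set w : Fin (n+1) → phaseSpace n k := Fin.snoc (Function.update X i Y) ξ with hw
  unfold multisymp
  rw [Fin.sum_univ_castSucc]
  have hlast : (-1 : ℝ) ^ ((Fin.last n : Fin (n+1)) : ℕ) *
      (w (Fin.last n)).2 (wedge n fun j => (w ((Fin.last n).succAbove j)).1) = 0 := by
    have hzero : (w ((Fin.last n).succAbove i)).1 = 0 := by
      rw [Fin.succAbove_last_apply]
      simp [hw, hY]
    rw [wedge_coord_zero hzero]
    simp
  rw [hlast, add_zero]
  rw [Finset.sum_eq_single i]
  · have h2 : (w i.castSucc).2 = π := by simp [hw, hY]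
    have h3 : (fun l => (w (i.castSucc.succAbove l)).1)
        = fun l => ((Fin.snoc X ξ : Fin (n+1) → phaseSpace n k) (i.castSucc.succAbove l)).1 := by
      funext l
      have ht : i.castSucc.succAbove l ≠ i.castSucc := Fin.succAbove_ne _ _
      rcases Fin.eq_castSucc_or_eq_last (i.castSucc.succAbove l) with ⟨j, hj⟩ | hj
      · rw [hj] at ht ⊢
        have hji : j ≠ i := fun h => ht (by rw [h])
        rw [hw]
        simp only [Fin.snoc_castSucc]
        rw [Function.update_of_ne hji]
      · rw [hj, hw]
        simp only [Fin.snoc_last]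
    rw [h2, h3]
    simp
  · intro m _ hmi
    obtain ⟨z, hz⟩ := Fin.exists_succAbove_eq
      (x := (i.castSucc : Fin (n+1))) (y := m.castSucc)
      (by simpa [Fin.castSucc_inj] using hmi.symm)
    have hzero : (w (m.castSucc.succAbove z)).1 = 0 := by
      rw [hz]
      simp [hw, hY]
    rw [wedge_coord_zero hzero]
    simp
  · intro h
    exact absurd (Finset.mem_univ i) h

/-- Lemma 4.4 of the paper, pointwise: if `ξ ∈ W` annihilates, through `Ω`,
all tangent vectors to the cone of decomposable `n`-vectors along Hamiltonian `n`-frames,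
then `ξ` is vertical, i.e. `pr_Q ξ = 0`. -/
theorem statement10 (n k : ℕ) (hn : 1 ≤ n) (hk : 1 ≤ k)
    (η : Module.Dual ℝ (phaseSpace n k))
    (hηP : ∃ π : Module.Dual ℝ (⋀[ℝ]^n (Fin (n + k) → ℝ)), η (0, π) ≠ 0)
    (hex : ∃ X : Fin n → phaseSpace n k, IsHamFrame n k η X)
    (ξ : phaseSpace n k)
    (hξ : ∀ X : Fin n → phaseSpace n k, IsHamFrame n k η X →
      ∀ (i : Fin n) (Y : phaseSpace n k),
        multisymp n k
          (Fin.snoc (Function.update X i Y) ξ : Fin (n + 1) → phaseSpace n k) = 0) :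
    ξ.1 = 0 := by
  classical
  obtain ⟨X, hX⟩ := hex
  obtain ⟨π₀, hπ₀⟩ := hηP
  set xq : Fin n → (Fin (n + k) → ℝ) := fun j => (X j).1 with hxqdef
  -- the Q-parts of the frame are linearly independent
  have h1 := hX.2 ((0 : Fin (n + k) → ℝ), π₀)
  rw [comp1] at h1
  have hwx : π₀ (wedge n xq) = η (0, π₀) :=
    mul_left_cancel₀ (pow_ne_zero n (neg_ne_zero.mpr (one_ne_zero))) h1
  have hπwx : π₀ (wedge n xq) ≠ 0 := by rw [hwx]; exact hπ₀
  have hιx : ExteriorAlgebra.ιMulti ℝ n xq ≠ 0 := by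
    intro h
    apply hπwx
    have hz : wedge n xq = 0 := Subtype.ext h
    rw [hz, map_zero]
  have hxq : LinearIndependent ℝ xq := by
    by_contra h
    exact hιx (AlternatingMap.map_linearDependent _ _ h)
  -- for every i, the wedge with `xq i` replaced by `ξ.1` (at the end) vanishes
  have h2 : ∀ i : Fin n, ExteriorAlgebra.ιMulti ℝ n
      (fun l => (Fin.snoc xq ξ.1 : Fin (n + 1) → (Fin (n + k) → ℝ))
        (i.castSucc.succAbove l)) = 0 := by
    intro i
    have hz : wedge n (fun l => ((Fin.snoc X ξ : Fin (n + 1) → phaseSpace n k)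
        (i.castSucc.succAbove l)).1) = 0 := by
      rw [← Module.forall_dual_apply_eq_zero_iff ℝ]
      intro π
      have h := hξ X hX i ((0 : Fin (n + k) → ℝ), π)
      rw [comp2] at h
      rcases mul_eq_zero.mp h with h' | h'
      · exact absurd h' (pow_ne_zero _ (neg_ne_zero.mpr one_ne_zero))
      · exact h'
    have hfam : (fun l => ((Fin.snoc X ξ : Fin (n + 1) → phaseSpace n k)
          (i.castSucc.succAbove l)).1)
        = fun l => (Fin.snoc xq ξ.1 : Fin (n + 1) → (Fin (n + k) → ℝ))
          (i.castSucc.succAbove l) := by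
      funext l
      exact fst_snoc X ξ _
    rw [hfam] at hz
    exact congrArg Subtype.val hz
  clear hξ hX h1 hwx hπwx hπ₀ hιx
  obtain ⟨m, rfl⟩ : ∃ m, n = m + 1 := ⟨n - 1, (Nat.succ_pred_eq_of_pos hn).symm⟩
  -- from the vanishing wedges: ξ.1 lies in the span of the `xq j`, `j ≠ i`, for every `i`
  have hspan : ∀ i : Fin (m + 1),
      ξ.1 ∈ Submodule.span ℝ (Set.range (xq ∘ i.succAbove)) := by
    intro i
    have hform : (fun l => (Fin.snoc xq ξ.1 : Fin (m + 2) → (Fin (m + 1 + k) → ℝ))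
          (i.castSucc.succAbove l))
        = (Fin.snoc (xq ∘ i.succAbove) ξ.1 : Fin (m + 1) → (Fin (m + 1 + k) → ℝ)) := by
      funext l
      induction l using Fin.lastCases with
      | last =>
        have hl : i.castSucc.succAbove (Fin.last m) = Fin.last (m + 1) := by
          rw [Fin.succAbove_castSucc_of_le _ _ (Fin.le_last i), Fin.succ_last]
        rw [hl]
        simp
      | cast j =>
        rw [Fin.castSucc_succAbove_castSucc]
        simp
    have hdep : ¬ LinearIndependent ℝ
        (Fin.snoc (xq ∘ i.succAbove) ξ.1 : Fin (m + 1) → (Fin (m + 1 + k) → ℝ)) := by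
      intro h
      apply aux_ne_zero h
      rw [← hform]
      exact h2 i
    rw [linearIndependent_fin_snoc] at hdep
    push_neg at hdep
    exact hdep (hxq.comp _ Fin.succAbove_right_injective)
  -- write ξ.1 in the basis and show all coefficients vanish
  have hmem : ξ.1 ∈ Submodule.span ℝ (Set.range xq) := by
    refine Submodule.span_mono ?_ (hspan (Fin.last m))
    rintro _ ⟨l, rfl⟩
    exact ⟨_, rfl⟩
  rw [Submodule.mem_span_range_iff_exists_fun ℝ] at hmem
  obtain ⟨c, hc⟩ := hmem
  have hc0 : ∀ i, c i = 0 := by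
    intro i
    by_contra hci
    have hnotmem : xq i ∉ Submodule.span ℝ (Set.range (xq ∘ i.succAbove)) := by
      rw [Set.range_comp, Fin.range_succAbove]
      exact hxq.notMem_span_image (by simp)
    apply hnotmem
    have hsum : ∑ j, c j • xq j ∈ Submodule.span ℝ (Set.range (xq ∘ i.succAbove)) := by
      rw [hc]
      exact hspan i
    have hrest : ∑ j ∈ Finset.univ.erase i, c j • xq j
        ∈ Submodule.span ℝ (Set.range (xq ∘ i.succAbove)) := by
      refine Submodule.sum_mem _ ?_
      intro j hj
      obtain ⟨z, hz⟩ := Fin.exists_succAbove_eq (x := j) (y := i)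
        (Finset.ne_of_mem_erase hj)
      refine Submodule.smul_mem _ _ (Submodule.subset_span ⟨z, ?_⟩)
      simp [hz]
    have hci' : c i • xq i ∈ Submodule.span ℝ (Set.range (xq ∘ i.succAbove)) := by
      have heq : c i • xq i = (∑ j, c j • xq j) - ∑ j ∈ Finset.univ.erase i, c j • xq j := by
        rw [← Finset.add_sum_erase Finset.univ _ (Finset.mem_univ i)]
        ring_nf
      rw [heq]
      exact Submodule.sub_mem _ hsum hrest
    have := Submodule.smul_mem _ (c i)⁻¹ hci'
    rwa [inv_smul_smul₀ hci] at this
  rw [← hc]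
  refine Finset.sum_eq_zero fun j _ => ?_
  rw [hc0 j, zero_smul]
end

section
/- Let η ∈ W* with η_P ≠ 0, suppose there exists a Hamiltonian n-frame for η, fix one such frame (X₁,…,Xₙ), set z_i := pr_Q X_i (linearly independent vectors of Q), z := z₁ ∧ ⋯ ∧ zₙ, and let T_zD := span{ z₁ ∧ ⋯ ∧ z_{i−1} ∧ v ∧ z_{i+1} ∧ ⋯ ∧ zₙ : 1 ≤ i ≤ n, v ∈ Q } ⊆ ⋀ⁿQ. Define the generalized pseudofiber direction L^η := { ξ ∈ W : Ω(X'₁,…,X'_{i−1}, Y, X'_{i+1},…,X'ₙ, ξ) = 0 for every Hamiltonian n-frame (X'₁,…,X'ₙ) for η, every index 1 ≤ i ≤ n, and every Y ∈ W }. Then L^η = { (0, π) : π ∈ P, π vanishes identically on T_zD }. -/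
open ExteriorAlgebra

set_option synthInstance.maxHeartbeats 1000000
set_option maxHeartbeats 1000000

variable {V : Type*} [AddCommGroup V] [Module ℝ V]

lemma wedge_eq_zero {N : ℕ} {v : Fin N → V} (h : ιMulti ℝ N v = 0) : wedge N v = 0 :=
  Subtype.ext h

lemma iMulti_snoc {N : ℕ} (v : Fin N → V) (w : V) :
    ιMulti ℝ (N + 1) (Fin.snoc v w) = ιMulti ℝ N v * ι ℝ w := by
  rw [ιMulti_apply, ιMulti_apply, List.ofFn_succ']
  simp [List.concat_eq_append]

lemma exists_dual {N : ℕ} {v : Fin N → V} (hv : LinearIndependent ℝ v) :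
    ∃ Φ : V →ₗ[ℝ] (Fin N → ℝ), ∀ i j, Φ (v j) i = if i = j then 1 else 0 := by
  set S := Submodule.span ℝ (Set.range v)
  obtain ⟨q, hq⟩ := S.exists_isCompl
  set B := Module.Basis.span hv
  refine ⟨LinearMap.pi (fun i => Finsupp.lapply i ∘ₗ (B.repr : S →ₗ[ℝ] (Fin N →₀ ℝ)) ∘ₗ
    Submodule.linearProjOfIsCompl S q hq), fun i j => ?_⟩
  have h1 : v j = ((B j : S) : V) := (congrArg Subtype.val (Module.Basis.span_apply hv j)).symm
  have h2 : Submodule.linearProjOfIsCompl S q hq ((B j : S) : V) = B j :=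
    Submodule.linearProjOfIsCompl_apply_left hq _
  simp [h1, h2, Finsupp.single_apply, eq_comm]

lemma iMulti_ne_zero {N : ℕ} {v : Fin N → V} (hv : LinearIndependent ℝ v) :
    ιMulti ℝ N v ≠ 0 := by
  obtain ⟨Φ, hΦ⟩ := exists_dual hv
  set A : V [⋀^Fin N]→ₗ[ℝ] ℝ := (Matrix.detRowAlternating).compLinearMap Φ
  set f : ∀ i : ℕ, V [⋀^Fin i]→ₗ[ℝ] ℝ :=
    Function.update (fun i => (0 : V [⋀^Fin i]→ₗ[ℝ] ℝ)) N A
  intro h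
  have h2 := congrArg (liftAlternating (R := ℝ) f) h
  rw [liftAlternating_apply_ιMulti, map_zero] at h2
  rw [show f N = A from Function.update_self _ _ _] at h2
  have h3 : A v = Matrix.det (Matrix.of fun i j => Φ (v i) j) := rfl
  have h4 : (Matrix.of fun i j => Φ (v i) j) = 1 := by
    ext i j; rw [Matrix.of_apply, hΦ, Matrix.one_apply]; simp [eq_comm]
  rw [h3, h4, Matrix.det_one] at h2
  exact one_ne_zero h2

/-- The tangent space to the decomposable cone. -/
noncomputable def TD {N : ℕ} (z : Fin N → V) : Submodule ℝ (⋀[ℝ]^N V) :=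
  Submodule.span ℝ {w | ∃ (i : Fin N) (v : V), w = wedge N (Function.update z i v)}

lemma wedge_exact_mem {N : ℕ} (z : Fin N → V) (i : Fin N) (x : Fin N → V)
    (hx : ∀ j, j ≠ i → ∃ j', x j = z j') : wedge N x ∈ TD z := by
  classical
  choose f hf using hx
  set g0 : Fin N → Fin N := fun j => if h : j = i then i else f j h with hg0
  by_cases hrep : ∃ j₁ j₂, j₁ ≠ i ∧ j₂ ≠ i ∧ j₁ ≠ j₂ ∧ g0 j₁ = g0 j₂
  · obtain ⟨j₁, j₂, h1, h2, h12, he⟩ := hrep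
    have hx12 : x j₁ = x j₂ := by
      rw [hf j₁ h1, hf j₂ h2]
      have e1 : g0 j₁ = f j₁ h1 := dif_neg h1
      have e2 : g0 j₂ = f j₂ h2 := dif_neg h2
      rw [← e1, ← e2, he]
    rw [wedge_eq_zero ((ιMulti ℝ N).map_eq_zero_of_eq x hx12 h12)]
    exact zero_mem _
  · push_neg at hrep
    set s : Finset (Fin N) := (Finset.univ.erase i).image g0 with hs
    have hcard : s.card < N := by
      calc s.card ≤ (Finset.univ.erase i).card := Finset.card_image_le
      _ < N := by
        rw [Finset.card_erase_of_mem (Finset.mem_univ i), Finset.card_univ, Fintype.card_fin]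
        have := i.pos
        omega
    have hex : ∃ i₀, i₀ ∉ s := by
      by_contra h
      push_neg at h
      have : (Finset.univ : Finset (Fin N)).card ≤ s.card :=
        Finset.card_le_card (fun a _ => h a)
      rw [Finset.card_univ, Fintype.card_fin] at this
      omega
    obtain ⟨i₀, hi₀⟩ := hex
    set g : Fin N → Fin N := fun j => if j = i then i₀ else g0 j with hg
    have hmemg0 : ∀ j, j ≠ i → g0 j ∈ s := fun j hj =>
      Finset.mem_image_of_mem g0 (Finset.mem_erase.2 ⟨hj, Finset.mem_univ j⟩)
    have hginj : Function.Injective g := by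
      intro a b hab
      by_cases ha : a = i <;> by_cases hb : b = i
      · rw [ha, hb]
      · exfalso
        rw [hg] at hab
        simp only [if_pos ha, if_neg hb] at hab
        exact hi₀ (hab ▸ hmemg0 b hb)
      · exfalso
        rw [hg] at hab
        simp only [if_pos hb, if_neg ha] at hab
        exact hi₀ (hab ▸ hmemg0 a ha)
      · by_contra hne
        apply hrep a b ha hb hne
        simpa [hg, if_neg ha, if_neg hb] using hab
    have hbij := Finite.injective_iff_bijective.mp hginj
    set σ : Equiv.Perm (Fin N) := Equiv.ofBijective g hbij with hσ
    have hx2 : x = (Function.update z i₀ (x i)) ∘ σ := by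
      funext j
      have hσj : σ j = g j := rfl
      by_cases hj : j = i
      · subst hj
        have hσj2 : σ j = i₀ := by show g j = i₀; rw [hg]; simp
        rw [Function.comp_apply, hσj2, Function.update_self]
      · have hgg : σ j = g0 j := by show g j = g0 j; rw [hg]; simp [hj]
        have hne : g0 j ≠ i₀ := fun h => hi₀ (h ▸ hmemg0 j hj)
        have hg0j : g0 j = f j hj := by rw [hg0]; simp [hj]
        rw [Function.comp_apply, hgg, Function.update_of_ne hne, hf j hj, hg0j]
    have hperm := AlternatingMap.map_perm (ιMulti ℝ N) (Function.update z i₀ (x i)) σ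
    have hmem : wedge N (Function.update z i₀ (x i)) ∈ TD z :=
      Submodule.subset_span ⟨i₀, x i, rfl⟩
    have h5 : ιMulti ℝ N x = Equiv.Perm.sign σ • ιMulti ℝ N (Function.update z i₀ (x i)) := by
      conv_lhs => rw [hx2]
      exact hperm
    rcases Int.units_eq_one_or (Equiv.Perm.sign σ) with hsg | hsg
    · rw [hsg, one_smul] at h5
      have heq : wedge N x = wedge N (Function.update z i₀ (x i)) := Subtype.ext h5
      rw [heq]; exact hmem
    · rw [hsg] at h5
      have h6 : ιMulti ℝ N x = -(ιMulti ℝ N (Function.update z i₀ (x i))) := by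
        rw [h5]; simp
      have heq : wedge N x = - wedge N (Function.update z i₀ (x i)) := Subtype.ext h6
      rw [heq]; exact neg_mem hmem

lemma wedge_update_add {N : ℕ} (x : Fin N → V) (j : Fin N) (a b : V) :
    wedge N (Function.update x j (a + b)) =
      wedge N (Function.update x j a) + wedge N (Function.update x j b) :=
  Subtype.ext ((ιMulti ℝ N).map_update_add x j a b)

lemma wedge_update_smul {N : ℕ} (x : Fin N → V) (j : Fin N) (c : ℝ) (a : V) :
    wedge N (Function.update x j (c • a)) = c • wedge N (Function.update x j a) :=
  Subtype.ext ((ιMulti ℝ N).map_update_smul x j c a)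

lemma wedge_update_mem {N : ℕ} (z : Fin N → V) (i : Fin N) (x : Fin N → V)
    (hx : ∀ j, j ≠ i → x j ∈ Submodule.span ℝ (Set.range z)) :
    wedge N x ∈ TD z := by
  classical
  suffices h : ∀ (e : ℕ) (x : Fin N → V),
      (∀ j, j ≠ i → e ≤ (j : ℕ) → ∃ j', x j = z j') →
      (∀ j, j ≠ i → (j : ℕ) < e → x j ∈ Submodule.span ℝ (Set.range z)) →
      wedge N x ∈ TD z by
    exact h N x (fun j hj hle => absurd hle (by have := j.isLt; omega))
      (fun j hj _ => hx j hj)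
  intro e
  induction e with
  | zero => exact fun x hex _ => wedge_exact_mem z i x (fun j hj => hex j hj (Nat.zero_le _))
  | succ e ih =>
    intro x hex hsp
    by_cases heN : e < N
    · set j₁ : Fin N := ⟨e, heN⟩ with hj₁
      by_cases hji : j₁ = i
      · apply ih x
        · intro j hj hle
          apply hex j hj
          have hne : (j : ℕ) ≠ e := by
            intro hje
            exact hj (by rw [← hji]; exact Fin.ext hje)
          omega
        · intro j hj hlt
          exact hsp j hj (by omega)
      · have hx1 : x j₁ ∈ Submodule.span ℝ (Set.range z) :=
          hsp j₁ hji (by simp [hj₁])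
        have key : ∀ u ∈ Submodule.span ℝ (Set.range z),
            wedge N (Function.update x j₁ u) ∈ TD z := by
          intro u hu
          induction hu using Submodule.span_induction with
          | mem w hw =>
            obtain ⟨j', rfl⟩ := hw
            apply ih (Function.update x j₁ (z j'))
            · intro j hj hle
              by_cases hjj : j = j₁
              · subst hjj
                rw [Function.update_self]
                exact ⟨j', rfl⟩
              · rw [Function.update_of_ne hjj]
                apply hex j hj
                have hne : (j : ℕ) ≠ e := fun hje => hjj (Fin.ext hje)
                omega
            · intro j hj hlt
              have hjj : j ≠ j₁ := by
                intro hjeq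
                rw [hjeq, hj₁] at hlt
                simp at hlt
              rw [Function.update_of_ne hjj]
              exact hsp j hj (by omega)
          | zero =>
            rw [wedge_eq_zero ((ιMulti ℝ N).map_coord_zero j₁ (Function.update_self _ _ _))]
            exact zero_mem _
          | add a b ha hb iha ihb =>
            rw [wedge_update_add]
            exact add_mem iha ihb
          | smul c a ha iha =>
            rw [wedge_update_smul]
            exact Submodule.smul_mem _ _ iha
        have := key (x j₁) hx1
        rwa [Function.update_eq_self] at this
    · apply ih x
      · intro j hj hle
        exact absurd hle (by have := j.isLt; omega)
      · intro j hj _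
        exact hsp j hj (by have := j.isLt; omega)

lemma term_zero (n k : ℕ) (w : Fin (n + 1) → phaseSpace n k) (i' t : Fin (n + 1))
    (ht : t ≠ i') (h0 : (w t).1 = 0) :
    (w i').2 (wedge n fun j => (w (i'.succAbove j)).1) = 0 := by
  obtain ⟨j, hj⟩ := Fin.exists_succAbove_eq ht
  have hv : wedge n (fun j => (w (i'.succAbove j)).1) = 0 :=
    wedge_eq_zero ((ιMulti ℝ n).map_coord_zero j (by rw [hj, h0]))
  rw [hv, map_zero]

lemma multisymp_snoc_vert (n k : ℕ) (X : Fin n → phaseSpace n k)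
    (ρ : Module.Dual ℝ (⋀[ℝ]^n (Fin (n + k) → ℝ))) :
    multisymp n k (Fin.snoc X (0, ρ)) = (-1 : ℝ) ^ n * ρ (wedge n fun j => (X j).1) := by
  rw [multisymp]
  rw [Finset.sum_eq_single (Fin.last n)]
  · have h2 : (fun j => ((Fin.snoc X (0, ρ) : Fin (n+1) → phaseSpace n k)
        ((Fin.last n).succAbove j)).1) = fun j => (X j).1 := by
      funext j
      rw [Fin.succAbove_last_apply, Fin.snoc_castSucc]
    rw [h2, Fin.snoc_last, Fin.val_last]
  · intro i' _ hne
    apply mul_eq_zero_of_right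
    exact term_zero n k _ i' (Fin.last n) (Ne.symm hne) (by rw [Fin.snoc_last])
  · intro h
    exact absurd (Finset.mem_univ _) h

lemma multisymp_snoc_update_vert (n k : ℕ) (X : Fin n → phaseSpace n k) (i : Fin n)
    (ρ : Module.Dual ℝ (⋀[ℝ]^n (Fin (n + k) → ℝ))) (ξ : phaseSpace n k) :
    multisymp n k (Fin.snoc (Function.update X i (0, ρ)) ξ) =
      (-1 : ℝ) ^ (i : ℕ) * ρ (wedge n fun j =>
        ((Fin.snoc (Function.update X i (0, ρ)) ξ : Fin (n+1) → phaseSpace n k)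
          ((Fin.castSucc i).succAbove j)).1) := by
  have hci : ((Fin.snoc (Function.update X i (0, ρ)) ξ : Fin (n+1) → phaseSpace n k)
      (Fin.castSucc i)) = (0, ρ) := by
    rw [Fin.snoc_castSucc, Function.update_self]
  rw [multisymp]
  rw [Finset.sum_eq_single (Fin.castSucc i)]
  · rw [hci, Fin.coe_castSucc]
  · intro i' _ hne
    apply mul_eq_zero_of_right
    exact term_zero n k _ i' (Fin.castSucc i) (Ne.symm hne) (by rw [hci])
  · intro h
    exact absurd (Finset.mem_univ _) h

lemma frame_wedge {n k : ℕ} {η : Module.Dual ℝ (phaseSpace n k)} {X : Fin n → phaseSpace n k}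
    (hX : IsHamFrame n k η X) (ρ : Module.Dual ℝ (⋀[ℝ]^n (Fin (n + k) → ℝ))) :
    ρ (wedge n fun j => (X j).1) = η (0, ρ) := by
  have h := hX.2 (0, ρ)
  rw [multisymp_snoc_vert] at h
  exact mul_left_cancel₀ (pow_ne_zero _ (by norm_num : (-1 : ℝ) ≠ 0)) h

lemma frame_fst_eq {n k : ℕ} {η : Module.Dual ℝ (phaseSpace n k)}
    {X X₀ : Fin n → phaseSpace n k} (hX : IsHamFrame n k η X) (hX₀ : IsHamFrame n k η X₀) :
    wedge n (fun j => (X j).1) = wedge n (fun j => (X₀ j).1) := by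
  rw [← sub_eq_zero]
  apply (Module.forall_dual_apply_eq_zero_iff ℝ _).mp
  intro φ
  rw [map_sub, frame_wedge hX, frame_wedge hX₀, sub_self]

lemma frame_fst_mem_span {n k : ℕ} {η : Module.Dual ℝ (phaseSpace n k)}
    {X X₀ : Fin n → phaseSpace n k} (hX : IsHamFrame n k η X) (hX₀ : IsHamFrame n k η X₀)
    (hzind : LinearIndependent ℝ (fun j => (X₀ j).1)) (j : Fin n) :
    (X j).1 ∈ Submodule.span ℝ (Set.range (fun j => (X₀ j).1)) := by
  have hwx : wedge n (fun j => (X j).1) = wedge n (fun j => (X₀ j).1) := frame_fst_eq hX hX₀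
  have hιx : ιMulti ℝ n (fun j => (X j).1) = ιMulti ℝ n (fun j => (X₀ j).1) :=
    congrArg Subtype.val hwx
  by_contra hnot
  have hind : LinearIndependent ℝ
      (Fin.snoc (fun j => (X₀ j).1) ((X j).1) : Fin (n+1) → (Fin (n+k) → ℝ)) :=
    linearIndependent_fin_snoc.mpr ⟨hzind, hnot⟩
  apply iMulti_ne_zero hind
  rw [iMulti_snoc, ← hιx, ← iMulti_snoc]
  refine (ιMulti ℝ (n+1)).map_eq_zero_of_eq _ (i := Fin.castSucc j) (j := Fin.last n) ?_ ?_
  · rw [Fin.snoc_castSucc, Fin.snoc_last]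
  · exact (Fin.castSucc_lt_last j).ne


/-- Proposition 4.4 of the paper, pointwise: the generalized pseudofiber
direction `L^η` coincides with the set of vertical vectors `(0,π)` with `π` annihilating
the tangent space `T_zD` at `z = pr_Q X₀₁ ∧ ⋯ ∧ pr_Q X₀ₙ` to the cone of decomposable
`n`-vectors of `Q`. -/
theorem statement11 (n k : ℕ) (hn : 1 ≤ n) (hk : 1 ≤ k)
    (η : Module.Dual ℝ (phaseSpace n k))
    (hηP : ∃ π : Module.Dual ℝ (⋀[ℝ]^n (Fin (n + k) → ℝ)), η (0, π) ≠ 0)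
    (X₀ : Fin n → phaseSpace n k) (hX₀ : IsHamFrame n k η X₀)
    (z : Fin n → (Fin (n + k) → ℝ)) (hz : z = fun i => (X₀ i).1)
    (TzD : Submodule ℝ (⋀[ℝ]^n (Fin (n + k) → ℝ)))
    (hTzD : TzD = Submodule.span ℝ
      {w | ∃ (i : Fin n) (v : Fin (n + k) → ℝ), w = wedge n (Function.update z i v)}) :
    LinearIndependent ℝ z ∧
      {ξ : phaseSpace n k | ∀ X : Fin n → phaseSpace n k, IsHamFrame n k η X →
          ∀ (i : Fin n) (Y : phaseSpace n k),
            multisymp n k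
              (Fin.snoc (Function.update X i Y) ξ : Fin (n + 1) → phaseSpace n k) = 0} =
        {ξ : phaseSpace n k | ∃ π : Module.Dual ℝ (⋀[ℝ]^n (Fin (n + k) → ℝ)),
          (∀ t ∈ TzD, π t = 0) ∧ ξ = (0, π)} := by
  classical
  obtain ⟨m, rfl⟩ : ∃ m, n = m + 1 := ⟨n - 1, by omega⟩
  subst hTzD
  have hzwedge : ∀ ρ : Module.Dual ℝ (⋀[ℝ]^(m+1) (Fin (m + 1 + k) → ℝ)),
      ρ (wedge (m+1) z) = η (0, ρ) := by
    intro ρ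
    rw [hz]
    exact frame_wedge hX₀ ρ
  have hzind : LinearIndependent ℝ z := by
    by_contra hdep
    obtain ⟨ρ₀, hρ₀⟩ := hηP
    have h0 : ιMulti ℝ (m+1) z = 0 := AlternatingMap.map_linearDependent _ _ hdep
    have := hzwedge ρ₀
    rw [wedge_eq_zero h0, map_zero] at this
    exact hρ₀ this.symm
  refine ⟨hzind, ?_⟩
  ext ξ
  obtain ⟨ζ, π⟩ := ξ
  simp only [Set.mem_setOf_eq]
  constructor
  · intro hL
    have hζspan : ∀ i : Fin (m+1), ζ ∈ Submodule.span ℝ (z '' ({i}ᶜ)) := by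
      intro i
      have hfam : ∀ ρ : Module.Dual ℝ (⋀[ℝ]^(m+1) (Fin (m + 1 + k) → ℝ)),
          ρ (wedge (m+1) (Fin.snoc (z ∘ i.succAbove) ζ : Fin (m+1) → _)) = 0 := by
        intro ρ
        have h := hL X₀ hX₀ i (0, ρ)
        rw [multisymp_snoc_update_vert] at h
        have hfameq : (fun j => ((Fin.snoc (Function.update X₀ i (0, ρ)) (ζ, π) :
              Fin (m+2) → phaseSpace (m+1) k) ((Fin.castSucc i).succAbove j)).1)
            = (Fin.snoc (z ∘ i.succAbove) ζ : Fin (m+1) → _) := by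
          funext j
          induction j using Fin.lastCases with
          | last =>
            have hsa : (Fin.castSucc i).succAbove (Fin.last m) = Fin.last (m+1) := by
              rw [Fin.succAbove_of_le_castSucc _ _
                (Fin.castSucc_le_castSucc_iff.mpr (Fin.le_last i)), Fin.succ_last]
            rw [hsa, Fin.snoc_last, Fin.snoc_last]
          | cast j =>
            rw [Fin.castSucc_succAbove_castSucc, Fin.snoc_castSucc, Fin.snoc_castSucc,
              Function.update_of_ne (Fin.succAbove_ne i j), hz]
            rfl
        rw [hfameq] at h
        rcases mul_eq_zero.mp h with h' | h'
        · exact absurd h' (pow_ne_zero _ (by norm_num))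
        · exact h'
      have h0 : wedge (m+1) (Fin.snoc (z ∘ i.succAbove) ζ : Fin (m+1) → _) = 0 :=
        (Module.forall_dual_apply_eq_zero_iff ℝ _).mp hfam
      have hdep : ¬ LinearIndependent ℝ (Fin.snoc (z ∘ i.succAbove) ζ : Fin (m+1) → _) := by
        intro h
        exact iMulti_ne_zero h (congrArg Subtype.val h0)
      rw [linearIndependent_fin_snoc] at hdep
      push_neg at hdep
      have hmem := hdep (hzind.comp _ Fin.succAbove_right_injective)
      rwa [Set.range_comp, Fin.range_succAbove] at hmem
    have hζ0 : ζ = 0 := by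
      have hmemr : ζ ∈ Submodule.span ℝ (Set.range z) := by
        refine Submodule.span_mono ?_ (hζspan 0)
        rintro a ⟨b, _, hb⟩
        exact ⟨b, hb⟩
      obtain ⟨c, hc⟩ := (Submodule.mem_span_range_iff_exists_fun ℝ).mp hmemr
      have hcz : ∀ i, c i = 0 := by
        intro i
        have h1 : ∑ j ∈ Finset.univ.erase i, c j • z j ∈ Submodule.span ℝ (z '' ({i}ᶜ)) :=
          Submodule.sum_mem _ (fun j hj => Submodule.smul_mem _ _
            (Submodule.subset_span ⟨j, (Finset.mem_erase.mp hj).1, rfl⟩))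
        have h2 : c i • z i + ∑ j ∈ Finset.univ.erase i, c j • z j = ζ := by
          rw [← hc]
          exact Finset.add_sum_erase _ (fun j => c j • z j) (Finset.mem_univ i)
        have h3 : c i • z i ∈ Submodule.span ℝ (z '' ({i}ᶜ)) := by
          have hsub := sub_mem (hζspan i) h1
          rwa [show ζ - ∑ j ∈ Finset.univ.erase i, c j • z j = c i • z i by
            rw [← h2]; abel] at hsub
        have h4 : c i • z i ∈ Submodule.span ℝ (z '' ({i} : Set (Fin (m+1)))) :=
          Submodule.smul_mem _ _ (Submodule.subset_span ⟨i, rfl, rfl⟩)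
        have hdisj := hzind.disjoint_span_image (s := {i}) (t := {i}ᶜ) disjoint_compl_right
        have h5 := Submodule.disjoint_def.mp hdisj _ h4 h3
        rcases smul_eq_zero.mp h5 with h | h
        · exact h
        · exact absurd h (hzind.ne_zero i)
      rw [← hc]
      simp [hcz]
    subst hζ0
    refine ⟨π, ?_, rfl⟩
    intro t ht
    induction ht using Submodule.span_induction with
    | mem w hw =>
      obtain ⟨i, v, rfl⟩ := hw
      have h := hL X₀ hX₀ i (v, 0)
      rw [multisymp_snoc_vert] at h
      have hfameq : (fun j => ((Function.update X₀ i ((v, 0) : phaseSpace (m+1) k)) j).1)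
          = Function.update z i v := by
        funext j
        by_cases hj : j = i
        · subst hj
          rw [Function.update_self, Function.update_self]
        · rw [Function.update_of_ne hj, Function.update_of_ne hj, hz]
      rw [hfameq] at h
      rcases mul_eq_zero.mp h with h' | h'
      · exact absurd h' (pow_ne_zero _ (by norm_num))
      · exact h'
    | zero => exact map_zero π
    | add a b _ _ iha ihb => rw [map_add, iha, ihb, add_zero]
    | smul c a _ iha => rw [map_smul, iha, smul_zero]
  · rintro ⟨π', hπ, hξ⟩
    injection hξ with hζ0 hπ0
    subst hζ0 hπ0
    intro X hX i Y
    rw [multisymp_snoc_vert]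
    have hfameq : (fun j => ((Function.update X i Y) j).1)
        = Function.update (fun j => (X j).1) i Y.1 := by
      funext j
      by_cases hj : j = i
      · subst hj
        rw [Function.update_self, Function.update_self]
      · rw [Function.update_of_ne hj, Function.update_of_ne hj]
    rw [hfameq]
    have hmem : wedge (m+1) (Function.update (fun j => (X j).1) i Y.1) ∈ TD z := by
      apply wedge_update_mem z i
      intro j hj
      rw [Function.update_of_ne hj]
      have hmem2 := frame_fst_mem_span hX hX₀ (hz ▸ hzind) j
      rwa [← hz] at hmem2
    rw [hπ _ hmem, mul_zero]
end
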